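/- For all Borel probability measures μ and ν on ℝ and all z ∈ ℂ∖ℝ: G_μ(z) ≠ 0, G_ν(z) ≠ 0, and G_μ(z) + G_ν(z) − z·G_μ(z)·G_ν(z) ≠ 0. -/

import Mathlib

open MeasureTheory

/-- The Cauchy transform `G_ρ(z) = ∫ 1/(z−t) dρ(t)` of a measure on `ℝ`. -/
noncomputable def cauchyTransform (ρ : Measure ℝ) (z : ℂ) : ℂ := ∫ t, (z - (t : ℂ))⁻¹ ∂ρ

lemma sub_ne_zero_of_im (z : ℂ) (hz : z.im ≠ 0) (t : ℝ) : z - (t : ℂ) ≠ 0 := by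
  intro h
  apply hz
  have := congrArg Complex.im h
  simpa using this

lemma norm_resolvent_le (z : ℂ) (hz : z.im ≠ 0) (t : ℝ) : ‖(z - (t : ℂ))⁻¹‖ ≤ |z.im|⁻¹ := by
  rw [norm_inv]
  apply inv_anti₀ (abs_pos.mpr hz)
  have : |(z - (t:ℂ)).im| ≤ ‖z - (t:ℂ)‖ := Complex.abs_im_le_norm _
  simpa using this

lemma continuous_resolvent (z : ℂ) (hz : z.im ≠ 0) :
    Continuous fun t : ℝ => (z - (t : ℂ))⁻¹ := by
  apply Continuous.inv₀ (by continuity)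
  exact fun t => sub_ne_zero_of_im z hz t

/-- Key lemma: nonvanishing and the `y·Im(1/G) ≥ y²` inequality. -/
lemma cauchyTransform_key (ρ : Measure ℝ) [IsProbabilityMeasure ρ] (z : ℂ) (hz : z.im ≠ 0) :
    cauchyTransform ρ z ≠ 0 ∧ z.im ^ 2 ≤ z.im * ((cauchyTransform ρ z)⁻¹).im := by
  set y := z.im with hy
  set f : ℝ → ℂ := fun t => (z - (t : ℂ))⁻¹ with hf
  set g : ℝ → ℝ := fun t => (Complex.normSq (z - (t : ℂ)))⁻¹ with hg
  -- integrability of f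
  have hfc : Continuous f := continuous_resolvent z hz
  have hfm : MemLp f ⊤ ρ :=
    memLp_top_of_bound hfc.aestronglyMeasurable _
      (Filter.Eventually.of_forall (norm_resolvent_le z hz))
  have hfi : Integrable f ρ := hfm.integrable le_top
  -- norm of f and g
  have hnormf : ∀ t, ‖f t‖ ^ 2 = g t := by
    intro t
    rw [hf, hg]
    simp only [norm_inv, inv_pow, Complex.sq_norm]
  -- integrability of g
  have hgc : Continuous g := by
    apply Continuous.inv₀ (by continuity)
    intro t
    exact (Complex.normSq_pos.mpr (sub_ne_zero_of_im z hz t)).ne'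
  have hgi : Integrable g ρ := by
    have : MemLp g ⊤ ρ := by
      apply memLp_top_of_bound hgc.aestronglyMeasurable ((|y|⁻¹) ^ 2)
      filter_upwards with t
      rw [← hnormf t]
      rw [Real.norm_eq_abs, abs_pow, abs_of_nonneg (norm_nonneg _)]
      exact pow_le_pow_left₀ (norm_nonneg _) (norm_resolvent_le z hz t) 2
    exact this.integrable le_top
  have hI2pos : 0 < ∫ t, g t ∂ρ := by
    rw [integral_pos_iff_support_of_nonneg]
    · have : Function.support g = Set.univ := by
        ext t
        simp only [Function.mem_support, Set.mem_univ, iff_true]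
        exact (inv_pos.mpr (Complex.normSq_pos.mpr (sub_ne_zero_of_im z hz t))).ne'
      rw [this]
      simp
    · intro t
      exact inv_nonneg.mpr (Complex.normSq_nonneg _)
    · exact hgi
  -- imaginary part of G
  have him : (cauchyTransform ρ z).im = -y * ∫ t, g t ∂ρ := by
    have h0 : ∫ t, (f t).im ∂ρ = (∫ t, f t ∂ρ).im := integral_im hfi
    rw [cauchyTransform]
    rw [show (∫ t, (z - (t:ℂ))⁻¹ ∂ρ) = ∫ t, f t ∂ρ from rfl, ← h0, ← integral_const_mul]
    apply integral_congr_ae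
    filter_upwards with t
    rw [hf, hg]
    simp only [Complex.inv_im, Complex.sub_im, Complex.ofReal_im, sub_zero]
    field_simp
    rfl
  -- Cauchy–Schwarz: ‖G‖² ≤ ∫ g
  have hCS : Complex.normSq (cauchyTransform ρ z) ≤ ∫ t, g t ∂ρ := by
    have h1 : ‖cauchyTransform ρ z‖ ≤ ∫ t, ‖f t‖ ∂ρ := norm_integral_le_integral_norm f
    have hX2 : MemLp (fun t => ‖f t‖) 2 ρ :=
      (hfm.norm).mono_exponent le_top
    have h2 : (∫ t, ‖f t‖ ∂ρ) ^ 2 ≤ ∫ t, ‖f t‖ ^ 2 ∂ρ := by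
      have hv := ProbabilityTheory.variance_nonneg (fun t => ‖f t‖) ρ
      rw [ProbabilityTheory.variance_eq_sub hX2] at hv
      have : (∫ t, ((fun t => ‖f t‖) ^ 2) t ∂ρ) = ∫ t, ‖f t‖ ^ 2 ∂ρ := by
        apply integral_congr_ae; filter_upwards with t; simp
      linarith [this ▸ hv]
    have h3 : (∫ t, ‖f t‖ ^ 2 ∂ρ) = ∫ t, g t ∂ρ := by
      apply integral_congr_ae; filter_upwards with t; rw [hnormf t]
    calc Complex.normSq (cauchyTransform ρ z) = ‖cauchyTransform ρ z‖ ^ 2 := by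
          rw [Complex.sq_norm]
      _ ≤ (∫ t, ‖f t‖ ∂ρ) ^ 2 := by
          apply pow_le_pow_left₀ (norm_nonneg _) h1
      _ ≤ ∫ t, g t ∂ρ := h2.trans_eq h3
  -- G ≠ 0
  have hGim : (cauchyTransform ρ z).im ≠ 0 := by
    rw [him]
    exact mul_ne_zero (neg_ne_zero.mpr hz) hI2pos.ne'
  have hG : cauchyTransform ρ z ≠ 0 := by
    intro h; apply hGim; rw [h]; simp
  refine ⟨hG, ?_⟩
  have hnsq : 0 < Complex.normSq (cauchyTransform ρ z) := Complex.normSq_pos.mpr hG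
  rw [Complex.inv_im, him, ← mul_div_assoc, le_div_iff₀ hnsq]
  nlinarith [hI2pos, hCS, hnsq]

theorem cauchyTransform_boolean_denominator_ne_zero
    (μ ν : Measure ℝ) [IsProbabilityMeasure μ] [IsProbabilityMeasure ν]
    (z : ℂ) (hz : z.im ≠ 0) :
    cauchyTransform μ z ≠ 0 ∧ cauchyTransform ν z ≠ 0 ∧
    cauchyTransform μ z + cauchyTransform ν z
      - z * cauchyTransform μ z * cauchyTransform ν z ≠ 0 := by
  obtain ⟨hμ, hμ'⟩ := cauchyTransform_key μ z hz
  obtain ⟨hν, hν'⟩ := cauchyTransform_key ν z hz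
  refine ⟨hμ, hν, ?_⟩
  set Gμ := cauchyTransform μ z
  set Gν := cauchyTransform ν z
  have hw : Gμ⁻¹ + Gν⁻¹ - z ≠ 0 := by
    intro h
    have him : (Gμ⁻¹ + Gν⁻¹ - z).im = 0 := by rw [h]; simp
    simp only [Complex.sub_im, Complex.add_im] at him
    have h1 : z.im * ((Gμ⁻¹).im + (Gν⁻¹).im - z.im) = 0 := by rw [him]; ring
    have hy2 : 0 < z.im ^ 2 := by positivity
    nlinarith [hμ', hν']
  have heq : Gμ + Gν - z * Gμ * Gν = Gμ * Gν * (Gμ⁻¹ + Gν⁻¹ - z) := by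
    field_simp
    ring
  rw [heq]
  exact mul_ne_zero (mul_ne_zero hμ hν) hw
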